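/- Let S be a local domain with maximal ideal m_S that is archimedean (⋂ₙ aⁿS = 0 for all nonunits a) and has Krull dimension at least 2. If m_S is a principal ideal, then ⋂ᵢ m_Sⁱ is a nonzero prime ideal of S, contradicting archimedeanness; hence m_S is not principal. -/
import Mathlib


/-- Let `S` be a local domain of Krull dimension at least 2.  If the maximal ideal
`m_S = xS` is principal, then `P = ⋂_{i>0} xⁱS` is a nonzero prime ideal of `S`; hence if
moreover `S` is archimedean (`⋂ₙ aⁿS = 0` for every nonunit `a`), then `m_S` is not
principal. -/
theorem archimedean_maximalIdeal_not_principal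
    (S : Type) [CommRing S] [IsDomain S] [IsLocalRing S]
    (hdim : 2 ≤ ringKrullDim S) :
    (∀ x : S, IsLocalRing.maximalIdeal S = Ideal.span {x} →
      (⨅ i : ℕ, Ideal.span {x ^ (i + 1)}).IsPrime ∧
        (⨅ i : ℕ, Ideal.span {x ^ (i + 1)}) ≠ ⊥) ∧
    ((∀ a : S, ¬ IsUnit a → (⨅ n : ℕ, Ideal.span {a ^ (n + 1)}) = ⊥) →
      ¬ (IsLocalRing.maximalIdeal S).IsPrincipal) := by
  -- Extract a chain of primes of length 2
  rw [ringKrullDim, Order.krullDim] at hdim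
  obtain ⟨p, hp⟩ : ∃ p : LTSeries (PrimeSpectrum S), 2 ≤ p.length := by
    by_contra h
    push_neg at h
    have hle : (⨆ (p : LTSeries (PrimeSpectrum S)), (p.length : WithBot ℕ∞)) ≤ 1 := by
      apply iSup_le
      intro p
      exact_mod_cast Nat.lt_succ_iff.mp (by exact_mod_cast h p)
    have := le_trans hdim hle
    norm_num at this
  -- the middle prime q : ⊥ < q < maximal
  set q : PrimeSpectrum S := p ⟨1, by omega⟩ with hqdef
  have hq01 : p ⟨0, by omega⟩ < q := p.strictMono (by simp [Fin.lt_def])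
  have hq12 : q < p ⟨2, by omega⟩ := p.strictMono (by simp [Fin.lt_def])
  have hqne : q.asIdeal ≠ ⊥ := by
    intro h
    exact absurd (h ▸ bot_le : q.asIdeal ≤ (p ⟨0, by omega⟩).asIdeal)
      (not_le_of_gt hq01)
  have hqlt : q.asIdeal < IsLocalRing.maximalIdeal S :=
    lt_of_lt_of_le hq12 (IsLocalRing.le_maximalIdeal (p ⟨2, by omega⟩).isPrime.ne_top)
  have main : ∀ x : S, IsLocalRing.maximalIdeal S = Ideal.span {x} →
      (⨅ i : ℕ, Ideal.span {x ^ (i + 1)}).IsPrime ∧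
        (⨅ i : ℕ, Ideal.span {x ^ (i + 1)}) ≠ ⊥ := by
    intro x hx
    have hxu : ¬ IsUnit x := by
      intro h
      exact (IsLocalRing.maximalIdeal.isMaximal S).ne_top
        (hx ▸ Ideal.span_singleton_eq_top.mpr h)
    have hxq : x ∉ q.asIdeal := fun h =>
      absurd (hx ▸ (Ideal.span_singleton_le_iff_mem _).mpr h) (not_le_of_gt hqlt)
    -- every element of q is divisible by every power of x
    have key : ∀ n : ℕ, q.asIdeal ≤ Ideal.span {x ^ n} := by
      intro n
      induction n with
      | zero => simp
      | succ n ih =>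
        intro y hy
        obtain ⟨s, hs⟩ := Ideal.mem_span_singleton.mp (ih hy)
        have hsq : s ∈ q.asIdeal := by
          rcases (q.isPrime.mem_or_mem (hs ▸ hy)) with h | h
          · exact absurd (q.isPrime.mem_of_pow_mem n h) hxq
          · exact h
        obtain ⟨t, ht⟩ := Ideal.mem_span_singleton.mp
          (hx ▸ (IsLocalRing.le_maximalIdeal q.isPrime.ne_top) hsq)
        exact Ideal.mem_span_singleton.mpr ⟨t, by rw [hs, ht, pow_succ]; ring⟩
    have hqP : q.asIdeal ≤ ⨅ i : ℕ, Ideal.span {x ^ (i + 1)} :=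
      le_iInf fun i => key (i + 1)
    have hxne : x ≠ 0 := by
      rintro rfl
      obtain ⟨y, hy, hyne⟩ := Submodule.exists_mem_ne_zero_of_ne_bot hqne
      have := key 1 hy
      simp [Ideal.mem_span_singleton] at this
      exact hyne this
    constructor
    · constructor
      · intro h
        have : (1 : S) ∈ Ideal.span {x ^ (0 + 1)} :=
          Ideal.mem_iInf.mp (h ▸ Submodule.mem_top) 0
        simp [Ideal.mem_span_singleton] at this
        exact hxu (isUnit_of_dvd_one this)
      · intro a b hab
        by_contra h
        push_neg at h
        obtain ⟨ha, hb⟩ := h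
        -- get maximal powers dividing a and b
        have hex : ∀ c : S, c ∉ (⨅ i : ℕ, Ideal.span {x ^ (i + 1)}) →
            ∃ n : ℕ, ∃ u : S, IsUnit u ∧ c = x ^ n * u := by
          intro c hc
          rw [Ideal.mem_iInf] at hc
          push_neg at hc
          obtain ⟨m, hm⟩ := hc
          have hP : ∃ m : ℕ, c ∉ Ideal.span {x ^ (m + 1)} := ⟨m, hm⟩
          classical
          set n := Nat.find hP with hn
          have hnot : c ∉ Ideal.span {x ^ (n + 1)} := Nat.find_spec hP
          have hdvd : x ^ n ∣ c := by
            rcases Nat.eq_zero_or_pos n with h0 | h0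
            · simp [h0]
            · have := Nat.find_min hP (m := n - 1) (by omega)
              rw [not_not] at this
              have : c ∈ Ideal.span {x ^ (n - 1 + 1)} := this
              rw [Ideal.mem_span_singleton] at this
              have hn1 : n - 1 + 1 = n := by omega
              rwa [hn1] at this
          obtain ⟨u, hu⟩ := hdvd
          refine ⟨n, u, ?_, hu⟩
          by_contra huu
          have : u ∈ IsLocalRing.maximalIdeal S := huu
          rw [hx, Ideal.mem_span_singleton] at this
          obtain ⟨v, hv⟩ := this
          exact hnot (Ideal.mem_span_singleton.mpr
            ⟨v, by rw [hu, hv, pow_succ]; ring⟩)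
        obtain ⟨n, u, hu, hau⟩ := hex a ha
        obtain ⟨m, v, hv, hbv⟩ := hex b hb
        have habm : a * b ∈ Ideal.span {x ^ (n + m + 1 + 1)} :=
          Ideal.mem_iInf.mp hab (n + m + 1)
        rw [Ideal.mem_span_singleton, hau, hbv] at habm
        have : x ^ (n + m) * x ^ 2 ∣ x ^ (n + m) * (u * v) := by
          have h1 : x ^ n * u * (x ^ m * v) = x ^ (n + m) * (u * v) := by
            rw [pow_add]; ring
          have h2 : x ^ (n + m + 1 + 1) = x ^ (n + m) * x ^ 2 := by
            rw [← pow_add]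
          rw [h1, h2] at habm
          exact habm
        have hx2 : x ^ 2 ∣ u * v :=
          (mul_dvd_mul_iff_left (pow_ne_zero (n + m) hxne)).mp this
        have : IsUnit (x ^ 2) := isUnit_of_dvd_unit hx2 (hu.mul hv)
        exact hxu (isUnit_of_dvd_unit (dvd_pow_self x two_ne_zero) this)
    · intro h
      exact hqne (le_bot_iff.mp (h ▸ hqP))
  refine ⟨main, ?_⟩
  rintro harch ⟨x, hx⟩
  have hxu : ¬ IsUnit x := by
    intro h
    exact (IsLocalRing.maximalIdeal.isMaximal S).ne_top
      (hx ▸ Ideal.span_singleton_eq_top.mpr h)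
  exact (main x hx).2 (harch x hxu)
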